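/- Fixed-point characterization of the limit: Under the assumptions of the preceding convergence result (i.i.d. row-stochastic X(n) with some finite m-fold product positive with positive probability, and W the common row of the almost-sure limit of the left products), if Y is a random element of the simplex S_d independent of X(1), then Y·X(1) has the same distribution as Y if and only if Y has the same distribution as W. -/

import Mathlib

open MeasureTheory ProbabilityTheory Filter

noncomputable instance {d : ℕ} : MeasurableSpace (Matrix (Fin d) (Fin d) ℝ) :=
  MeasurableSpace.pi

/-- The left products `X(n,1) = X(n) X(n-1) ⋯ X(1)` (with `X(0,1) := 1`). -/
def leftProd {Ω : Type*} {d : ℕ}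
    (X : ℕ → Ω → Matrix (Fin d) (Fin d) ℝ) : ℕ → Ω → Matrix (Fin d) (Fin d) ℝ
  | 0 => fun _ => 1
  | n + 1 => fun ω => X (n + 1) ω * leftProd X n ω

instance {d : ℕ} : BorelSpace (Matrix (Fin d) (Fin d) ℝ) :=
  show BorelSpace (Fin d → Fin d → ℝ) from inferInstance

instance {d : ℕ} : HasOuterApproxClosed (Matrix (Fin d) (Fin d) ℝ) :=
  show HasOuterApproxClosed (Fin d → Fin d → ℝ) from inferInstance

instance {d : ℕ} : Nonempty (Matrix (Fin d) (Fin d) ℝ) := ⟨1⟩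

section Aux

open BoundedContinuousFunction

lemma bcf_nnreal_bound {A : Type*} [TopologicalSpace A] [Nonempty A] (φ : A →ᵇ NNReal) :
    ∃ C : NNReal, ∀ a, φ a ≤ C := by
  obtain ⟨C, hC⟩ := φ.bounded
  set x₀ := Classical.arbitrary A
  refine ⟨φ x₀ + C.toNNReal, fun a => ?_⟩
  calc φ a ≤ φ x₀ + nndist (φ a) (φ x₀) := NNReal.le_add_nndist _ _
  _ ≤ φ x₀ + C.toNNReal := by
      gcongr
      have h := hC a x₀
      rw [← Real.toNNReal_coe (r := nndist (φ a) (φ x₀))]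
      exact Real.toNNReal_mono (by simpa [coe_nndist] using h)

lemma lintegral_bcf_tendsto {A : Type*} [MeasurableSpace A] [TopologicalSpace A]
    [OpensMeasurableSpace A] {α : Type*} [MeasurableSpace α]
    (ρ : Measure α) [IsProbabilityMeasure ρ] (φ : A →ᵇ NNReal) {C : NNReal}
    (hC : ∀ a, φ a ≤ C)
    (h : ℕ → α → A) (hl : α → A) (hm : ∀ n, Measurable (h n))
    (hten : ∀ᵐ x ∂ρ, Tendsto (fun n => h n x) atTop (nhds (hl x))) :
    Tendsto (fun n => ∫⁻ x, φ (h n x) ∂ρ) atTop (nhds (∫⁻ x, φ (hl x) ∂ρ)) := by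
  have hφm : Measurable fun a => ((φ a : NNReal) : ENNReal) :=
    measurable_coe_nnreal_ennreal.comp φ.continuous.measurable
  apply tendsto_lintegral_of_dominated_convergence (fun _ => (C : ENNReal))
  · exact fun n => hφm.comp (hm n)
  · exact fun n => Filter.Eventually.of_forall fun x => ENNReal.coe_le_coe.mpr (hC _)
  · simp
  · filter_upwards [hten] with x hx
    exact (ENNReal.continuous_coe.tendsto _).comp ((φ.continuous.tendsto _).comp hx)

/-- If two sequences of random elements have equal laws and converge a.e., then the limits
have equal laws. -/
lemma map_eq_of_tendsto {α₁ α₂ A : Type*} [MeasurableSpace α₁] [MeasurableSpace α₂]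
    [MeasurableSpace A] [TopologicalSpace A] [HasOuterApproxClosed A] [BorelSpace A] [Nonempty A]
    (ρ₁ : Measure α₁) (ρ₂ : Measure α₂) [IsProbabilityMeasure ρ₁] [IsProbabilityMeasure ρ₂]
    (f : ℕ → α₁ → A) (flim : α₁ → A) (g : ℕ → α₂ → A) (glim : α₂ → A)
    (hfm : ∀ n, Measurable (f n)) (hgm : ∀ n, Measurable (g n))
    (hflim : Measurable flim) (hglim : Measurable glim)
    (hf : ∀ᵐ x ∂ρ₁, Tendsto (fun n => f n x) atTop (nhds (flim x)))
    (hg : ∀ᵐ x ∂ρ₂, Tendsto (fun n => g n x) atTop (nhds (glim x)))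
    (heq : ∀ n, Measure.map (f n) ρ₁ = Measure.map (g n) ρ₂) :
    Measure.map flim ρ₁ = Measure.map glim ρ₂ := by
  haveI : IsProbabilityMeasure (Measure.map flim ρ₁) := Measure.isProbabilityMeasure_map hflim.aemeasurable
  apply ext_of_forall_lintegral_eq_of_IsFiniteMeasure
  intro φ
  have hφm : Measurable fun a => ((φ a : NNReal) : ENNReal) :=
    measurable_coe_nnreal_ennreal.comp φ.continuous.measurable
  obtain ⟨C, hC⟩ := bcf_nnreal_bound φ
  have h1 := lintegral_bcf_tendsto ρ₁ φ hC f flim hfm hf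
  have h2 := lintegral_bcf_tendsto ρ₂ φ hC g glim hgm hg
  have heq' : ∀ n, (∫⁻ x, φ (f n x) ∂ρ₁) = ∫⁻ x, φ (g n x) ∂ρ₂ := by
    intro n
    rw [← lintegral_map hφm (hfm n), ← lintegral_map hφm (hgm n), heq n]
  rw [lintegral_map hφm hflim, lintegral_map hφm hglim]
  simp only [heq'] at h1
  exact tendsto_nhds_unique h1 h2

lemma ae_fst' {α β : Type*} [MeasurableSpace α] [MeasurableSpace β]
    (μ : Measure α) (ν : Measure β) [SFinite μ] [SFinite ν] {p : α → Prop}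
    (h : ∀ᵐ x ∂μ, p x) : ∀ᵐ q ∂(μ.prod ν), p q.1 := by
  rw [ae_iff] at h ⊢
  have e : {q : α × β | ¬ p q.1} = {x | ¬ p x} ×ˢ Set.univ := by ext q; simp
  rw [e, Measure.prod_prod, h, zero_mul]

lemma ae_snd' {α β : Type*} [MeasurableSpace α] [MeasurableSpace β]
    (μ : Measure α) (ν : Measure β) [SFinite μ] [SFinite ν] {p : β → Prop}
    (h : ∀ᵐ x ∂ν, p x) : ∀ᵐ q ∂(μ.prod ν), p q.2 := by
  rw [ae_iff] at h ⊢
  have e : {q : α × β | ¬ p q.2} = Set.univ ×ˢ {x | ¬ p x} := by ext q; simp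
  rw [e, Measure.prod_prod, h, mul_zero]

lemma measurable_matMul {d : ℕ} :
    Measurable (fun p : (Matrix (Fin d) (Fin d) ℝ) × (Matrix (Fin d) (Fin d) ℝ) => p.1 * p.2) := by
  apply measurable_pi_lambda; intro i; apply measurable_pi_lambda; intro j
  simp only [Matrix.mul_apply]
  apply Finset.measurable_sum; intro k _
  exact Measurable.mul (((measurable_pi_apply k).comp ((measurable_pi_apply i).comp measurable_fst)))
    ((measurable_pi_apply j).comp ((measurable_pi_apply k).comp measurable_snd))

lemma measurable_leftProd {Ω' : Type*} [MeasurableSpace Ω'] {d : ℕ}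
    {F : ℕ → Ω' → Matrix (Fin d) (Fin d) ℝ} (hF : ∀ i, Measurable (F i)) :
    ∀ n, Measurable (leftProd F n)
  | 0 => measurable_const
  | (n+1) => measurable_matMul.comp ((hF (n+1)).prodMk (measurable_leftProd hF n))

lemma leftProd_congr₂ {Ω₁ Ω₂ : Type*} {d : ℕ}
    {F : ℕ → Ω₁ → Matrix (Fin d) (Fin d) ℝ} {G : ℕ → Ω₂ → Matrix (Fin d) (Fin d) ℝ}
    {x : Ω₁} {y : Ω₂} :
    ∀ n, (∀ i, 1 ≤ i → i ≤ n → F i x = G i y) → leftProd F n x = leftProd G n y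
  | 0, _ => rfl
  | (n+1), h => by
      show F (n+1) x * leftProd F n x = G (n+1) y * leftProd G n y
      rw [h (n+1) (by omega) (by omega),
        leftProd_congr₂ n (fun i h1 h2 => h i h1 (by omega))]

lemma leftProd_succ_shift {Ω : Type*} {d : ℕ} (X : ℕ → Ω → Matrix (Fin d) (Fin d) ℝ) :
    ∀ n (ω : Ω), leftProd X (n+1) ω = leftProd (fun i => X (i+1)) n ω * X 1 ω
  | 0, ω => by
      show X 1 ω * (1 : Matrix (Fin d) (Fin d) ℝ) = 1 * X 1 ω
      simp
  | (n+1), ω => by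
      show X (n+2) ω * leftProd X (n+1) ω = _ * X 1 ω
      rw [leftProd_succ_shift X n ω]
      show _ = (X (n+2) ω * leftProd (fun i => X (i+1)) n ω) * X 1 ω
      rw [mul_assoc]

section Indep
variable {Ω : Type*} [MeasurableSpace Ω] {μpr : Measure Ω} [IsProbabilityMeasure μpr] {d : ℕ}
  {X : ℕ → Ω → Matrix (Fin d) (Fin d) ℝ}

lemma indepFun_X_leftProd (hmeas : ∀ n, Measurable (X n))
    (hiid : iIndepFun X μpr)
    (m s n : ℕ) (hm : m ∉ Finset.Icc (s+1) (s+n)) :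
    IndepFun (X m) (leftProd (fun i => X (i+s)) n) μpr := by
  classical
  set T : Finset ℕ := Finset.Icc (s+1) (s+n) with hT
  have hdisj : Disjoint ({m} : Finset ℕ) T := by
    simp [Finset.disjoint_singleton_left, hm]
  have h := hiid.indepFun_finset {m} T hdisj hmeas
  have hφ : Measurable (fun v : ({i // i ∈ ({m} : Finset ℕ)} → Matrix (Fin d) (Fin d) ℝ) =>
      v ⟨m, Finset.mem_singleton_self m⟩) := measurable_pi_apply _
  set F : ℕ → ({i // i ∈ T} → Matrix (Fin d) (Fin d) ℝ) → Matrix (Fin d) (Fin d) ℝ :=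
    fun i v => if h : i + s ∈ T then v ⟨i+s, h⟩ else 1 with hF
  have hFm : ∀ i, Measurable (F i) := by
    intro i
    by_cases hmem : i + s ∈ T
    · simpa [hF, hmem] using (measurable_pi_apply (⟨i+s, hmem⟩ : {i // i ∈ T}))
    · simpa [hF, hmem] using (measurable_const :
        Measurable fun _ : ({i // i ∈ T} → Matrix (Fin d) (Fin d) ℝ) =>
          (1 : Matrix (Fin d) (Fin d) ℝ))
  have h2 := h.comp hφ (measurable_leftProd hFm n)
  have e1 : ((fun v : ({i // i ∈ ({m} : Finset ℕ)} → Matrix (Fin d) (Fin d) ℝ) =>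
      v ⟨m, Finset.mem_singleton_self m⟩) ∘
        (fun a (i : {i // i ∈ ({m} : Finset ℕ)}) => X i a)) = X m := rfl
  have e2 : ((leftProd F n) ∘ (fun a (i : {i // i ∈ T}) => X i a))
      = leftProd (fun i => X (i+s)) n := by
    funext ω
    show leftProd F n (fun i : {i // i ∈ T} => X i ω) = _
    apply leftProd_congr₂
    intro i h1 h2
    have hmem : i + s ∈ T := by simp [hT]; omega
    simp [hF, hmem]
  rwa [e1, e2] at h2

lemma law_leftProd_shift (hmeas : ∀ n, Measurable (X n))
    (hiid : iIndepFun X μpr)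
    (hident : ∀ n, Measure.map (X n) μpr = Measure.map (X 0) μpr) :
    ∀ n s, Measure.map (leftProd (fun i => X (i+s)) n) μpr
      = Measure.map (leftProd X n) μpr := by
  have key : ∀ n s, Measure.map (leftProd (fun i => X (i+s)) n) μpr
      = Nat.rec (motive := fun _ => Measure (Matrix (Fin d) (Fin d) ℝ)) (Measure.dirac 1)
        (fun _ q => Measure.map (fun p : _ × _ => p.1 * p.2)
          ((Measure.map (X 0) μpr).prod q)) n := by
    intro n
    induction n with
    | zero =>
      intro s
      show Measure.map (fun _ => (1 : Matrix (Fin d) (Fin d) ℝ)) μpr = _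
      simp [Measure.map_const]
    | succ n ih =>
      intro s
      have hsm : Measurable (leftProd (fun i => X (i+s)) n) :=
        measurable_leftProd (fun i => hmeas _) n
      have hindep : IndepFun (X (n+1+s)) (leftProd (fun i => X (i+s)) n) μpr :=
        indepFun_X_leftProd hmeas hiid (n+1+s) s n (by simp; omega)
      have hpair := (indepFun_iff_map_prod_eq_prod_map_map
        (hmeas (n+1+s)).aemeasurable hsm.aemeasurable).mp hindep
      show Measure.map (fun ω => X (n+1+s) ω * leftProd (fun i => X (i+s)) n ω) μpr = _
      have e : (fun ω => X (n+1+s) ω * leftProd (fun i => X (i+s)) n ω)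
          = (fun p : _ × _ => p.1 * p.2) ∘
            (fun ω => (X (n+1+s) ω, leftProd (fun i => X (i+s)) n ω)) := rfl
      rw [e, ← Measure.map_map measurable_matMul ((hmeas _).prodMk hsm), hpair,
        hident (n+1+s), ih s]
  intro n s
  rw [key n s, ← key n 0]
  have e : (fun i => X (i + 0)) = X := by funext i; simp
  rw [e]

end Indep

/-- The action of a matrix on a row vector. -/
def mulRow {d : ℕ} (p : (Fin d → ℝ) × Matrix (Fin d) (Fin d) ℝ) : Fin d → ℝ :=
  fun j => ∑ i, p.1 i * p.2 i j

lemma measurable_mulRow {d : ℕ} : Measurable (mulRow (d := d)) := by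
  apply measurable_pi_lambda; intro j
  apply Finset.measurable_sum; intro i _
  exact ((measurable_pi_apply i).comp measurable_fst).mul
    ((measurable_pi_apply j).comp ((measurable_pi_apply i).comp measurable_snd))

lemma mulRow_one {d : ℕ} (y : Fin d → ℝ) : mulRow (y, (1 : Matrix (Fin d) (Fin d) ℝ)) = y := by
  funext j
  simp [mulRow, Matrix.one_apply, mul_ite]

lemma mulRow_mul {d : ℕ} (y : Fin d → ℝ) (A B : Matrix (Fin d) (Fin d) ℝ) :
    mulRow (y, A * B) = mulRow (mulRow (y, A), B) := by
  funext j
  simp only [mulRow, Matrix.mul_apply, Finset.mul_sum, Finset.sum_mul]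
  rw [Finset.sum_comm]
  simp [mul_assoc]

lemma continuous_mulRow_right {d : ℕ} (y : Fin d → ℝ) :
    Continuous (fun A : Matrix (Fin d) (Fin d) ℝ => mulRow (y, A)) := by
  apply continuous_pi; intro j
  apply continuous_finset_sum; intro i _
  exact continuous_const.mul ((continuous_apply j).comp (continuous_apply i))

lemma mulRow_of_simplex {d : ℕ} {y : Fin d → ℝ} (hy : y ∈ stdSimplex ℝ (Fin d))
    (w : Fin d → ℝ) : mulRow (y, Matrix.of fun _ j => w j) = w := by
  funext j
  show ∑ i, y i * w j = w j
  rw [← Finset.sum_mul, hy.2, one_mul]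

end Aux

/-- Fixed-point characterization of the limiting common row `W`: for `Y` a
random element of the simplex independent of `X(1)`, `Y·X(1) =d Y` iff
`Y =d W`. -/
theorem fixed_point_characterization
    {Ω : Type*} [MeasureSpace Ω] [IsProbabilityMeasure (ℙ : Measure Ω)]
    {d : ℕ} (hd : 0 < d)
    (X : ℕ → Ω → Matrix (Fin d) (Fin d) ℝ)
    (hmeas : ∀ n, Measurable (X n))
    (hiid : iIndepFun X ℙ)
    (hident : ∀ n, Measure.map (X n) ℙ = Measure.map (X 0) ℙ)
    (hstoch : ∀ n ω, (∀ i j, 0 ≤ X n ω i j) ∧ ∀ i, ∑ j, X n ω i j = 1)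
    (hpos : ∃ m, 0 < ℙ {ω | ∀ i j, 0 < leftProd X m ω i j})
    (W : Ω → Fin d → ℝ) (hW : Measurable W)
    (hWsimplex : ∀ᵐ ω ∂ℙ, W ω ∈ stdSimplex ℝ (Fin d))
    (hconv : ∀ᵐ ω ∂ℙ, Tendsto (fun n => leftProd X n ω) atTop
      (nhds (Matrix.of fun _ j => W ω j)))
    (Y : Ω → Fin d → ℝ) (hY : Measurable Y)
    (hYsimplex : ∀ ω, Y ω ∈ stdSimplex ℝ (Fin d))
    (hYX : IndepFun Y (X 1) ℙ) :
    Measure.map (fun ω j => ∑ i, Y ω i * X 1 ω i j) ℙ = Measure.map Y ℙ ↔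
      Measure.map Y ℙ = Measure.map W ℙ := by
  classical
  set μ : Measure (Fin d → ℝ) := Measure.map Y ℙ with hμ
  set P : Measure (Matrix (Fin d) (Fin d) ℝ) := Measure.map (X 1) ℙ with hP
  set μW : Measure (Fin d → ℝ) := Measure.map W ℙ with hμW
  haveI : IsProbabilityMeasure μ := Measure.isProbabilityMeasure_map hY.aemeasurable
  haveI : IsProbabilityMeasure P := Measure.isProbabilityMeasure_map (hmeas 1).aemeasurable
  haveI : IsProbabilityMeasure μW := Measure.isProbabilityMeasure_map hW.aemeasurable
  set L : Ω → Matrix (Fin d) (Fin d) ℝ := fun ω => Matrix.of fun _ j => W ω j with hL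
  have hLm : Measurable L := by
    apply measurable_pi_lambda; intro i; apply measurable_pi_lambda; intro j
    exact (measurable_pi_apply j).comp hW
  have hlpm : ∀ n, Measurable (leftProd X n) := fun n => measurable_leftProd hmeas n
  -- restate the left-hand side
  have hlhs : Measure.map (fun ω j => ∑ i, Y ω i * X 1 ω i j) ℙ
      = Measure.map mulRow (μ.prod P) := by
    have e : (fun ω j => ∑ i, Y ω i * X 1 ω i j)
        = mulRow ∘ (fun ω => (Y ω, X 1 ω)) := rfl
    rw [e, ← Measure.map_map measurable_mulRow (hY.prodMk (hmeas 1)),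
      (indepFun_iff_map_prod_eq_prod_map_map hY.aemeasurable (hmeas 1).aemeasurable).mp hYX]
  have hmulLX : Measurable (fun p : Ω × Ω => L p.1 * X 1 p.2) :=
    measurable_matMul.comp ((hLm.comp measurable_fst).prodMk ((hmeas 1).comp measurable_snd))
  -- Step 1: the law of `W` is a fixed point.
  have hWfix : Measure.map mulRow (μW.prod P) = μW := by
    have hLfix : Measure.map (fun p : Ω × Ω => L p.1 * X 1 p.2) ((ℙ : Measure Ω).prod ℙ)
        = Measure.map L ℙ := by
      refine map_eq_of_tendsto ((ℙ : Measure Ω).prod ℙ) ℙ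
        (fun n p => leftProd X n p.1 * X 1 p.2) (fun p => L p.1 * X 1 p.2)
        (fun n => leftProd X (n+1)) L
        (fun n => measurable_matMul.comp
          (((hlpm n).comp measurable_fst).prodMk ((hmeas 1).comp measurable_snd)))
        (fun n => hlpm (n+1)) hmulLX hLm ?_ ?_ ?_
      · filter_upwards [ae_fst' (ℙ : Measure Ω) ℙ hconv] with p hp
        have c : Continuous fun A : Matrix (Fin d) (Fin d) ℝ => A * X 1 p.2 :=
          continuous_id.matrix_mul continuous_const
        exact (c.tendsto _).comp hp
      · filter_upwards [hconv] with ω hω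
        exact hω.comp (tendsto_add_atTop_nat 1)
      · intro n
        show Measure.map (fun p : Ω × Ω => leftProd X n p.1 * X 1 p.2) ((ℙ : Measure Ω).prod ℙ)
          = Measure.map (leftProd X (n+1)) ℙ
        have e : (fun p : Ω × Ω => leftProd X n p.1 * X 1 p.2)
            = (fun q : (Matrix (Fin d) (Fin d) ℝ) × (Matrix (Fin d) (Fin d) ℝ) => q.1 * q.2)
              ∘ Prod.map (leftProd X n) (X 1) := rfl
        rw [e, ← Measure.map_map measurable_matMul ((hlpm n).prodMap (hmeas 1)),
          ← Measure.map_prod_map _ _ (hlpm n) (hmeas 1),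
          ← law_leftProd_shift hmeas hiid hident n 1]
        have hsm : Measurable (leftProd (fun i => X (i+1)) n) :=
          measurable_leftProd (fun i => hmeas _) n
        have hindep : IndepFun (leftProd (fun i => X (i+1)) n) (X 1) ℙ :=
          (indepFun_X_leftProd hmeas hiid 1 1 n (by simp)).symm
        rw [← (indepFun_iff_map_prod_eq_prod_map_map hsm.aemeasurable
          (hmeas 1).aemeasurable).mp hindep,
          Measure.map_map measurable_matMul (hsm.prodMk (hmeas 1))]
        have e2 : ((fun q : (Matrix (Fin d) (Fin d) ℝ) × (Matrix (Fin d) (Fin d) ℝ) =>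
            q.1 * q.2) ∘ (fun ω => (leftProd (fun i => X (i+1)) n ω, X 1 ω)))
            = leftProd X (n+1) := by
          funext ω
          exact (leftProd_succ_shift X n ω).symm
        rw [e2]
    -- push forward with the first-row map
    set r : Matrix (Fin d) (Fin d) ℝ → (Fin d → ℝ) := fun A => A ⟨0, hd⟩ with hr
    have hrm : Measurable r := measurable_pi_apply _
    have key : Measure.map (r ∘ fun p : Ω × Ω => L p.1 * X 1 p.2) ((ℙ : Measure Ω).prod ℙ)
        = Measure.map (r ∘ L) ℙ := by
      rw [← Measure.map_map hrm hmulLX, ← Measure.map_map hrm hLm, hLfix]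
    have e3 : (r ∘ fun p : Ω × Ω => L p.1 * X 1 p.2) = mulRow ∘ Prod.map W (X 1) := by
      funext p
      show (L p.1 * X 1 p.2) ⟨0, hd⟩ = mulRow (W p.1, X 1 p.2)
      funext j
      simp [Matrix.mul_apply, mulRow, hL]
    have e4 : (r ∘ L) = W := rfl
    rw [e3, e4, ← Measure.map_map measurable_mulRow (hW.prodMap (hmeas 1)),
      ← Measure.map_prod_map _ _ hW (hmeas 1)] at key
    exact key
  constructor
  · -- forward direction
    intro hfix0
    rw [hlhs] at hfix0
    have hQ : ∀ n, Measure.map mulRow (μ.prod (Measure.map (leftProd X n) ℙ)) = μ := by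
      intro n
      induction n with
      | zero =>
        show Measure.map mulRow
          (μ.prod (Measure.map (fun _ => (1 : Matrix (Fin d) (Fin d) ℝ)) ℙ)) = μ
        rw [Measure.map_const]
        simp only [measure_univ, one_smul]
        have hm1 : Measurable (fun y : Fin d → ℝ => (y, (1 : Matrix (Fin d) (Fin d) ℝ))) :=
          measurable_id.prodMk measurable_const
        rw [Measure.prod_dirac, Measure.map_map measurable_mulRow hm1]
        have e : (mulRow ∘ fun y : Fin d → ℝ => (y, (1 : Matrix (Fin d) (Fin d) ℝ))) = id := by
          funext y
          exact mulRow_one y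
        rw [e, Measure.map_id]
      | succ n ih =>
        have hindep : IndepFun (X (n+1)) (leftProd X n) ℙ := by
          have h0 : (fun i => X (i + 0)) = X := by funext i; simp
          have h1 := indepFun_X_leftProd hmeas hiid (n+1) 0 n (by simp)
          rwa [h0] at h1
        have hdec : Measure.map (leftProd X (n+1)) ℙ
            = Measure.map (fun q : (Matrix (Fin d) (Fin d) ℝ) × (Matrix (Fin d) (Fin d) ℝ) =>
                q.1 * q.2) (P.prod (Measure.map (leftProd X n) ℙ)) := by
          have e : leftProd X (n+1)
              = (fun q : (Matrix (Fin d) (Fin d) ℝ) × (Matrix (Fin d) (Fin d) ℝ) => q.1 * q.2)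
                ∘ (fun ω => (X (n+1) ω, leftProd X n ω)) := rfl
          rw [e, ← Measure.map_map measurable_matMul ((hmeas (n+1)).prodMk (hlpm n)),
            (indepFun_iff_map_prod_eq_prod_map_map (hmeas (n+1)).aemeasurable
              (hlpm n).aemeasurable).mp hindep, hident (n+1), hP, hident 1]
        rw [hdec]
        set Q : Measure (Matrix (Fin d) (Fin d) ℝ) := Measure.map (leftProd X n) ℙ with hQn
        have step1 : μ.prod (Measure.map (fun q : (Matrix (Fin d) (Fin d) ℝ) ×
            (Matrix (Fin d) (Fin d) ℝ) => q.1 * q.2) (P.prod Q))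
            = Measure.map (Prod.map id (fun q : (Matrix (Fin d) (Fin d) ℝ) ×
                (Matrix (Fin d) (Fin d) ℝ) => q.1 * q.2)) (μ.prod (P.prod Q)) := by
          rw [← Measure.map_prod_map _ _ measurable_id measurable_matMul, Measure.map_id]
        rw [step1, Measure.map_map measurable_mulRow (measurable_id.prodMap measurable_matMul),
          ← Measure.prodAssoc_prod, Measure.map_map
            (measurable_mulRow.comp (measurable_id.prodMap measurable_matMul))
            MeasurableEquiv.prodAssoc.measurable]
        have e5 : ((mulRow ∘ Prod.map id (fun q : (Matrix (Fin d) (Fin d) ℝ) ×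
            (Matrix (Fin d) (Fin d) ℝ) => q.1 * q.2)) ∘ (MeasurableEquiv.prodAssoc :
              ((Fin d → ℝ) × Matrix (Fin d) (Fin d) ℝ) × Matrix (Fin d) (Fin d) ℝ ≃ᵐ
                (Fin d → ℝ) × Matrix (Fin d) (Fin d) ℝ × Matrix (Fin d) (Fin d) ℝ))
            = mulRow ∘ Prod.map mulRow id := by
          funext q
          show mulRow (q.1.1, q.1.2 * q.2) = mulRow (mulRow (q.1.1, q.1.2), q.2)
          exact mulRow_mul _ _ _
        rw [e5, ← Measure.map_map measurable_mulRow (measurable_mulRow.prodMap measurable_id),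
          ← Measure.map_prod_map _ _ measurable_mulRow measurable_id, Measure.map_id,
          hfix0, ih]
    have hGlaw : ∀ n, Measure.map (fun p : (Fin d → ℝ) × Ω => mulRow (p.1, leftProd X n p.2))
        (μ.prod ℙ) = Measure.map Y ℙ := by
      intro n
      have e : (fun p : (Fin d → ℝ) × Ω => mulRow (p.1, leftProd X n p.2))
          = mulRow ∘ Prod.map id (leftProd X n) := rfl
      rw [e, ← Measure.map_map measurable_mulRow (measurable_id.prodMap (hlpm n)),
        ← Measure.map_prod_map _ _ measurable_id (hlpm n), Measure.map_id, hQ n]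
    have hsimpμ : ∀ᵐ y ∂μ, y ∈ stdSimplex ℝ (Fin d) := by
      rw [hμ]
      exact (ae_map_iff hY.aemeasurable (isClosed_stdSimplex ℝ (Fin d)).measurableSet).mpr
        (Filter.Eventually.of_forall hYsimplex)
    have final : Measure.map (fun p : (Fin d → ℝ) × Ω => W p.2) (μ.prod ℙ)
        = Measure.map Y ℙ := by
      refine map_eq_of_tendsto (μ.prod ℙ) ℙ
        (fun n p => mulRow (p.1, leftProd X n p.2)) (fun p => W p.2)
        (fun _ => Y) Y
        (fun n => measurable_mulRow.comp (measurable_fst.prodMk ((hlpm n).comp measurable_snd)))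
        (fun _ => hY) (hW.comp measurable_snd) hY ?_
        (Filter.Eventually.of_forall fun _ => tendsto_const_nhds) hGlaw
      filter_upwards [(ae_fst' μ ℙ hsimpμ).and (ae_snd' μ ℙ hconv)] with p hp
      have c := ((continuous_mulRow_right p.1).tendsto _).comp hp.2
      rwa [mulRow_of_simplex hp.1] at c
    have e6 : (fun p : (Fin d → ℝ) × Ω => W p.2) = W ∘ Prod.snd := rfl
    rw [e6, ← Measure.map_map hW measurable_snd, Measure.map_snd_prod] at final
    simp only [measure_univ, one_smul] at final
    exact final.symm
  · -- backward direction
    intro hYW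
    rw [hlhs, hYW]
    exact hWfix
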